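/- For n divisible by 4, the majority function MAJ_n can be computed by a decision tree of depth at most 3n/4 where every query is a threshold-2 function T_2 applied to some multiset of input variables. -/

import Mathlib

/-- A decision tree over input variables indexed by `ι`: each internal node
queries a Boolean function of the whole input. -/
inductive DTree (ι : Type) : Type where
  | leaf : Bool → DTree ι
  | node : ((ι → Bool) → Bool) → DTree ι → DTree ι → DTree ι

namespace DTree
variable {ι : Type}

/-- Depth: number of edges on the longest root-to-leaf path. -/
def depth : DTree ι → ℕ
  | leaf _ => 0
  | node _ t f => max t.depth f.depth + 1

/-- Evaluate the tree on an input. -/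
def eval : DTree ι → (ι → Bool) → Bool
  | leaf b, _ => b
  | node q t f, x => if q x then t.eval x else f.eval x

/-- The computation path of an input: the list of query answers on the way down. -/
def path : DTree ι → (ι → Bool) → List Bool
  | leaf _, _ => []
  | node q t f, x => q x :: (if q x then t.path x else f.path x)

/-- Number of leaves. -/
def numLeaves : DTree ι → ℕ
  | leaf _ => 1
  | node _ t f => t.numLeaves + f.numLeaves

/-- All queries in the tree belong to the family `Q`. -/
def OnlyQueries (Q : Set ((ι → Bool) → Bool)) : DTree ι → Prop
  | leaf _ => True
  | node q t f => q ∈ Q ∧ t.OnlyQueries Q ∧ f.OnlyQueries Q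

end DTree

/-- OR-queries: OR of an arbitrary subset of the variables. -/
def orQueries (ι : Type) [DecidableEq ι] : Set ((ι → Bool) → Bool) :=
  {q | ∃ S : Finset ι, q = fun x => S.sup x}

/-- The threshold-2 function of a multiset of variables: `1` iff at least two
of the queried positions (with multiplicity) carry value `1`. -/
def T2 {ι : Type} (M : Multiset ι) (x : ι → Bool) : Bool :=
  decide (2 ≤ (M.map fun i => (x i).toNat).sum)

/-- T₂-queries: threshold-2 applied to an arbitrary multiset of variables. -/
def t2Queries (ι : Type) : Set ((ι → Bool) → Bool) :=
  {q | ∃ M : Multiset ι, q = T2 M}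

/-- Single-variable (standard) queries. -/
def bitQueries (ι : Type) : Set ((ι → Bool) → Bool) :=
  {q | ∃ i : ι, q = fun x => x i}

/-- Number of ones in an input. -/
def ones (n : ℕ) (x : Fin n → Bool) : ℕ := ∑ i, (x i).toNat

/-- The simple graph on `{1,…,n}` encoded by a Boolean vector of edge variables. -/
def graphOf (n : ℕ) (x : Sym2 (Fin n) → Bool) : SimpleGraph (Fin n) :=
  SimpleGraph.fromEdgeSet {e | x e = true}

namespace T2Aux
variable {ι : Type}

def gs (x : ι → Bool) (g : Multiset ι) : ℕ := (g.map fun i => (x i).toNat).sum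

def buildT : List (Multiset ι) → ℕ → DTree ι
  | _, 0 => .leaf true
  | L, 1 => if L.length < 1 then .leaf false else
      .node (T2 (2 • L.sum)) (.leaf true) (.leaf false)
  | L, 2 => if L.length < 2 then .leaf false else
      .node (T2 L.sum) (.leaf true) (.leaf false)
  | g1 :: g2 :: L', (k+3) =>
      if L'.length + 2 < k + 3 then .leaf false
      else .node (T2 (g1 + g2)) (buildT L' (k+1)) (buildT ((g1+g2) :: L') (k+3))
  | _, _+3 => .leaf false
termination_by L _ => L.length
decreasing_by all_goals (simp only [List.length_cons]; omega)

lemma gs_add (x : ι → Bool) (a b : Multiset ι) : gs x (a + b) = gs x a + gs x b := by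
  simp [gs]

lemma gs_smul2 (x : ι → Bool) (a : Multiset ι) : gs x (2 • a) = 2 * gs x a := by
  rw [two_nsmul, gs_add]; omega

lemma gs_sum (x : ι → Bool) (L : List (Multiset ι)) :
    gs x L.sum = (L.map (gs x)).sum := by
  induction L with
  | nil => simp [gs]
  | cons a L ih => simp [gs_add, ih]

lemma T2_eq (M : Multiset ι) (x : ι → Bool) : T2 M x = decide (2 ≤ gs x M) := rfl

lemma tot_le (x : ι → Bool) (L : List (Multiset ι)) (h : ∀ g ∈ L, gs x g ≤ 1) :
    (L.map (gs x)).sum ≤ L.length := by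
  induction L with
  | nil => simp
  | cons a L ih =>
      simp only [List.map_cons, List.sum_cons, List.length_cons]
      have := h a (by simp)
      have := ih (fun g hg => h g (by simp [hg]))
      omega

lemma eval_buildT (x : ι → Bool) : ∀ (L : List (Multiset ι)) (k : ℕ),
    (∀ g ∈ L, gs x g ≤ 1) →
    (buildT L k).eval x = decide (k ≤ (L.map (gs x)).sum) := by
  intro L k
  induction L, k using buildT.induct with
  | case1 L => intro _; simp [buildT, DTree.eval]
  | case2 L hlen =>
      intro _
      have : L = [] := List.length_eq_zero_iff.mp (by omega)
      subst this
      simp [buildT, DTree.eval]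
  | case3 L hlen =>
      intro _
      rw [buildT]
      simp only [if_neg hlen, DTree.eval, T2_eq, gs_smul2, gs_sum]
      rcases Nat.lt_or_ge ((L.map (gs x)).sum) 1 with h1 | h1
      · rw [if_neg (by simp; omega), decide_eq_false (by omega)]
      · rw [if_pos (by simp; omega), decide_eq_true (by omega)]
  | case4 L hlen =>
      intro h
      have hle := tot_le x L h
      rw [buildT]
      simp only [if_pos hlen, DTree.eval]
      rw [decide_eq_false (by omega)]
  | case5 L hlen =>
      intro _
      rw [buildT]
      simp only [if_neg hlen, DTree.eval, T2_eq, gs_sum]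
      rcases Nat.lt_or_ge ((L.map (gs x)).sum) 2 with h1 | h1
      · rw [if_neg (by simp; omega), decide_eq_false (by omega)]
      · rw [if_pos (by simp; omega), decide_eq_true (by omega)]
  | case6 g1 g2 L' k hlen =>
      intro h
      have hle := tot_le x (g1 :: g2 :: L') h
      rw [buildT]
      rw [if_pos (by omega)]
      rw [DTree.eval, decide_eq_false (by simp only [List.length_cons] at hle; omega)]
  | case7 g1 g2 L' k hlen ih1 ih2 =>
      intro h
      have h1 : gs x g1 ≤ 1 := h g1 (by simp)
      have h2 : gs x g2 ≤ 1 := h g2 (by simp)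
      have hrest : ∀ g ∈ L', gs x g ≤ 1 := fun g hg => h g (by simp [hg])
      rw [buildT]
      simp only [if_neg hlen, DTree.eval, T2_eq, gs_add]
      simp only [List.map_cons, List.sum_cons]
      rcases Nat.lt_or_ge (gs x g1 + gs x g2) 2 with hc | hc
      · rw [if_neg (by simp only [decide_eq_true_eq]; omega)]
        rw [ih2 (by
          intro g hg
          rcases List.mem_cons.mp hg with rfl | hg'
          · rw [gs_add]; omega
          · exact hrest g hg')]
        simp only [List.map_cons, List.sum_cons, gs_add]
        apply decide_eq_decide.mpr
        omega
      · rw [if_pos (by simp only [decide_eq_true_eq]; omega)]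
        rw [ih1 hrest]
        apply decide_eq_decide.mpr
        omega
  | case8 L k hne =>
      intro h
      have hlen : L.length ≤ 1 := by
        match L with
        | [] => simp
        | [a] => simp
        | a :: b :: t => exact absurd rfl (by intro hh; exact hne a b t hh)
      have hle := tot_le x L h
      rw [buildT]
      · rw [decide_eq_false (by omega)]; rfl
      · exact hne

lemma depth_buildT : ∀ (L : List (Multiset ι)) (k : ℕ),
    (buildT L k).depth ≤ L.length - k / 2 := by
  intro L k
  induction L, k using buildT.induct with
  | case1 L => simp [buildT, DTree.depth]
  | case2 L hlen => rw [buildT, if_pos hlen]; simp [if_pos hlen, DTree.depth]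
  | case3 L hlen => rw [buildT]; simp only [if_neg hlen, DTree.depth]; omega
  | case4 L hlen => rw [buildT, if_pos hlen]; simp [if_pos hlen, DTree.depth]
  | case5 L hlen => rw [buildT]; simp only [if_neg hlen, DTree.depth]; omega
  | case6 g1 g2 L' k hlen => rw [buildT, if_pos (by omega)]; simp [DTree.depth]
  | case7 g1 g2 L' k hlen ih1 ih2 =>
      rw [buildT]
      simp only [if_neg hlen, DTree.depth, List.length_cons] at *
      omega
  | case8 L k hne =>
      rw [buildT]
      · simp [DTree.depth]
      · exact hne

lemma onlyQueries_buildT : ∀ (L : List (Multiset ι)) (k : ℕ),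
    (buildT L k).OnlyQueries (t2Queries ι) := by
  intro L k
  induction L, k using buildT.induct with
  | case1 L => simp [buildT, DTree.OnlyQueries]
  | case2 L hlen => rw [buildT, if_pos hlen]; simp [if_pos hlen, DTree.OnlyQueries]
  | case3 L hlen =>
      rw [buildT]; simp only [if_neg hlen, DTree.OnlyQueries]
      exact ⟨⟨_, rfl⟩, trivial, trivial⟩
  | case4 L hlen => rw [buildT, if_pos hlen]; simp [if_pos hlen, DTree.OnlyQueries]
  | case5 L hlen =>
      rw [buildT]; simp only [if_neg hlen, DTree.OnlyQueries]
      exact ⟨⟨_, rfl⟩, trivial, trivial⟩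
  | case6 g1 g2 L' k hlen => rw [buildT, if_pos (by omega)]; simp [DTree.OnlyQueries]
  | case7 g1 g2 L' k hlen ih1 ih2 =>
      rw [buildT]; simp only [if_neg hlen, DTree.OnlyQueries]
      exact ⟨⟨_, rfl⟩, ih1, ih2⟩
  | case8 L k hne =>
      rw [buildT]
      · simp [DTree.OnlyQueries]
      · exact hne

end T2Aux

/-- The majority function on `n` variables (4 ∣ n) is computed by a
T₂-decision tree of depth at most `3n/4`. -/
theorem stmt8 (n : ℕ) (hn : 4 ∣ n) :
    ∃ t : DTree (Fin n), t.OnlyQueries (t2Queries (Fin n)) ∧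
      (∀ x, t.eval x = true ↔ n / 2 ≤ ones n x) ∧
      t.depth ≤ 3 * n / 4 := by
  classical
  set L0 : List (Multiset (Fin n)) := (List.finRange n).map (fun i => ({i} : Multiset (Fin n))) with hL0
  have hlen : L0.length = n := by simp [hL0]
  refine ⟨T2Aux.buildT L0 (n / 2), T2Aux.onlyQueries_buildT _ _, ?_, ?_⟩
  · intro x
    have hbd : ∀ g ∈ L0, T2Aux.gs x g ≤ 1 := by
      intro g hg
      simp only [hL0, List.mem_map] at hg
      obtain ⟨i, _, rfl⟩ := hg
      simp [T2Aux.gs]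
      cases x i <;> simp
    rw [T2Aux.eval_buildT x L0 (n/2) hbd]
    have htot : (L0.map (T2Aux.gs x)).sum = ones n x := by
      rw [hL0, List.map_map, ones, Fin.sum_univ_def]
      rfl
    rw [htot]
    simp
  · have := T2Aux.depth_buildT L0 (n / 2)
    rw [hlen] at this
    obtain ⟨m, rfl⟩ := hn
    omega
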